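/- If the beliefs Π satisfy weak convex independence, then maximal full extraction holds: for every value function v : T → ℝ there exists a menu c : T → ℝ^S achieving maximal full extraction for (Π, v). -/
import Mathlib


noncomputable section

/-- Euclidean inner product on ℝ^S. -/
def dotp {S : Type*} [Fintype S] (x y : S → ℝ) : ℝ := ∑ s, x s * y s

/-- The contract `c t` is mixed-strategy maximal for type `t` in the menu `c`:
no mixed strategy over the menu has strictly smaller expected cost for every belief in `P t`. -/
def MixedMaximal {S T : Type*} [Fintype S] [Fintype T]
    (P : T → Set (S → ℝ)) (c : T → (S → ℝ)) (t : T) : Prop :=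
  ¬ ∃ σ ∈ stdSimplex ℝ T, ∀ π ∈ P t, (∑ s, σ s * dotp π (c s)) < dotp π (c t)

theorem stmt_3 {S T : Type*} [Fintype S] [Fintype T] [Nonempty S] [Nonempty T]
    (P : T → Set (S → ℝ))
    (hne : ∀ t, (P t).Nonempty) (hcl : ∀ t, IsClosed (P t))
    (hcv : ∀ t, Convex ℝ (P t)) (hsub : ∀ t, P t ⊆ stdSimplex ℝ S)
    (hwci : ∃ p : T → (S → ℝ), (∀ t, p t ∈ P t) ∧
      ∀ t, p t ∉ closure (convexHull ℝ (p '' {s | s ≠ t})))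
    (v : T → ℝ) :
    ∃ c : T → (S → ℝ), ∀ t : T,
      MixedMaximal P c t ∧ ∃ π ∈ P t, dotp π (c t) = v t := by
  obtain ⟨p, hp, hind⟩ := hwci
  -- separation: for each t, a vector y and ε > 0 with dotp (p t) y + ε ≤ dotp (p s) y for s ≠ t
  have hsep : ∀ t : T, ∃ (y : S → ℝ) (ε : ℝ), 0 < ε ∧
      ∀ s, s ≠ t → dotp (p t) y + ε ≤ dotp (p s) y := by
    classical
    intro t
    obtain ⟨f, u, hfu, hub⟩ := geometric_hahn_banach_point_closed
      ((convex_convexHull ℝ _).closure) isClosed_closure (hind t)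
    refine ⟨fun i => f ((Pi.single i (1:ℝ) : S → ℝ)), u - f (p t), by linarith, ?_⟩
    have hf : ∀ x : S → ℝ, f x = ∑ i, x i * f ((Pi.single i (1:ℝ) : S → ℝ)) := by
      intro x
      have hx : x = ∑ i, x i • (Pi.single i (1:ℝ) : S → ℝ) := by
        funext j
        simp [Finset.sum_apply, Pi.single_apply]
      conv_lhs => rw [hx]
      simp [map_sum, map_smul, smul_eq_mul]
    intro s hs
    have hmem : p s ∈ closure (convexHull ℝ (p '' {s' | s' ≠ t})) :=
      subset_closure (subset_convexHull ℝ _ (Set.mem_image_of_mem p hs))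
    have := hub (p s) hmem
    simp only [dotp, ← hf]
    linarith
  choose y ε hε hsepy using hsep
  have hT : (Finset.univ : Finset T).Nonempty := Finset.univ_nonempty
  set V : ℝ := Finset.univ.sup' hT v with hV
  set M : T → ℝ := fun t => max 0 ((V - v t) / ε t) with hM
  have hM0 : ∀ t, 0 ≤ M t := fun t => le_max_left _ _
  set c : T → (S → ℝ) :=
    fun s => fun i => M s * y s i + (v s - M s * dotp (p s) (y s)) with hc
  -- dot product with a simplex element
  have hdot : ∀ π ∈ stdSimplex ℝ S, ∀ s,
      dotp π (c s) = M s * dotp π (y s) + (v s - M s * dotp (p s) (y s)) := by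
    intro π hπ s
    have hsum : ∑ i, π i = 1 := hπ.2
    have key : ∀ K : ℝ, ∑ i, π i * (M s * y s i + K) = M s * (∑ i, π i * y s i) + K := by
      intro K
      calc ∑ i, π i * (M s * y s i + K) = ∑ i, (M s * (π i * y s i) + K * π i) := by
            apply Finset.sum_congr rfl; intros; ring
        _ = M s * (∑ i, π i * y s i) + K * (∑ i, π i) := by
            rw [Finset.sum_add_distrib, ← Finset.mul_sum, ← Finset.mul_sum]
        _ = M s * (∑ i, π i * y s i) + K := by rw [hsum]; ring
    simpa only [dotp, hc] using key (v s - M s * dotp (p s) (y s))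
  have heq : ∀ t, dotp (p t) (c t) = v t := by
    intro t
    rw [hdot (p t) (hsub t (hp t)) t]; ring
  have hge : ∀ t s, v t ≤ dotp (p t) (c s) := by
    intro t s
    rcases eq_or_ne s t with rfl | hst
    · rw [heq]
    · rw [hdot (p t) (hsub t (hp t)) s]
      have h1 : dotp (p t) (y s) ≥ dotp (p s) (y s) + ε s := by
        have := hsepy s t (Ne.symm hst); linarith
      have h2 : (V - v s) ≤ M s * ε s := by
        have hle : (V - v s) / ε s ≤ M s := le_max_right _ _
        calc V - v s = (V - v s) / ε s * ε s := by
              rw [div_mul_cancel₀ _ (ne_of_gt (hε s))]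
          _ ≤ M s * ε s := by
              exact mul_le_mul_of_nonneg_right hle (le_of_lt (hε s))
      have h3 : v t ≤ V := Finset.le_sup' v (Finset.mem_univ t)
      nlinarith [mul_le_mul_of_nonneg_left h1 (hM0 s)]
  refine ⟨c, fun t => ⟨?_, p t, hp t, heq t⟩⟩
  rintro ⟨σ, hσ, hlt⟩
  have h := hlt (p t) (hp t)
  have hbig : v t ≤ ∑ s, σ s * dotp (p t) (c s) := by
    calc v t = (∑ s, σ s) * v t := by rw [hσ.2]; ring
      _ = ∑ s, σ s * v t := by rw [Finset.sum_mul]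
      _ ≤ ∑ s, σ s * dotp (p t) (c s) :=
          Finset.sum_le_sum fun s _ =>
            mul_le_mul_of_nonneg_left (hge t s) (hσ.1 s)
  rw [heq t] at h
  linarith
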